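/- Let t be a univariate polynomial of degree p with t'(0) < 0, suppose ᾱ = min R₊ exists (R₊ as before) and is a simple root. If t'(ᾱ) = 0, then σ(α) = -t'(α)/α^p satisfies lim_{α→ᾱ⁻} σ(α) = 0, so the minimizer curve ψ defined by ψ(σ(α)) = α for α ∈ (0, ᾱ) extends to a bounded minimizer curve defined on all of (0, ∞) (it is 0-persistent). Conversely, if there exists a bounded 0-persistent minimizer curve ψ with values in (0, ᾱ], then t'(ᾱ) = 0. -/

import Mathlib

open Set Filter

section
variable (p : ℕ) (t : Polynomial ℝ) (abar : ℝ)

lemma aux_sign' (q : ℝ → ℝ) (hq : Continuous q) (b : ℝ) (h0 : q 0 < 0)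
    (hnz : ∀ x ∈ Set.Ioo 0 b, q x ≠ 0) : ∀ x ∈ Set.Ioo 0 b, q x < 0 := by
  intro x hx
  by_contra h
  push_neg at h
  have hpos : 0 < q x := lt_of_le_of_ne h (Ne.symm (hnz x hx))
  have hmem : (0 : ℝ) ∈ Set.Ioo (q 0) (q x) := ⟨h0, hpos⟩
  obtain ⟨c, hc, hqc⟩ := intermediate_value_Ioo (le_of_lt hx.1) hq.continuousOn hmem
  exact hnz c ⟨hc.1, hc.2.trans hx.2⟩ hqc

lemma aux_hasDerivAt' (σ s : ℝ) (hp : 2 ≤ p) :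
    HasDerivAt (fun s : ℝ => t.eval s + σ / ((p : ℝ) + 1) * s ^ (p + 1))
      (t.derivative.eval s + σ * s ^ p) s := by
  have h1 : HasDerivAt (fun s : ℝ => t.eval s) (t.derivative.eval s) s := t.hasDerivAt s
  have h2 : HasDerivAt (fun s : ℝ => s ^ (p + 1)) (((p : ℝ) + 1) * s ^ p) s := by
    have := hasDerivAt_pow (p + 1) s
    simpa [Nat.cast_add, Nat.cast_one] using this
  have h3 := h1.add (h2.const_mul (σ / ((p : ℝ) + 1)))
  have hne : ((p : ℝ) + 1) ≠ 0 := by positivity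
  refine h3.congr_deriv ?_
  field_simp

lemma aux_direct (hp : 2 ≤ p) (h0 : t.derivative.eval 0 < 0)
    (hleast : IsLeast {α : ℝ | 0 < α ∧ (t.derivative.eval α = 0 ∨
      t.derivative.derivative.eval α * α - (p : ℝ) * t.derivative.eval α = 0)} abar)
    (hd : t.derivative.eval abar = 0) :
    Filter.Tendsto (fun α : ℝ => -t.derivative.eval α / α ^ p)
        (nhdsWithin abar (Set.Iio abar)) (nhds 0) ∧
      ∃ ψ : ℝ → ℝ, ContinuousOn ψ (Set.Ioi 0) ∧
        (∀ σ ∈ Set.Ioi (0 : ℝ),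
          IsLocalMin (fun s : ℝ => t.eval s + σ / ((p : ℝ) + 1) * |s| ^ (p + 1)) (ψ σ)) ∧
        (∀ α ∈ Set.Ioo 0 abar, ψ (-t.derivative.eval α / α ^ p) = α) ∧
        (∃ M : ℝ, ∀ σ ∈ Set.Ioi (0 : ℝ), |ψ σ| ≤ M) := by
  have habar : 0 < abar := hleast.1.1
  set d := t.derivative with hdd
  set f : ℝ → ℝ := fun α => -d.eval α / α ^ p with hf
  have hp0 : p ≠ 0 := by omega
  -- no critical points inside (0, abar)
  have hnotin : ∀ α ∈ Set.Ioo 0 abar, d.eval α ≠ 0 ∧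
      d.derivative.eval α * α - (p : ℝ) * d.eval α ≠ 0 := by
    intro α hα
    constructor <;> intro h
    · have := hleast.2 ⟨hα.1, Or.inl h⟩; linarith [hα.2]
    · have := hleast.2 ⟨hα.1, Or.inr h⟩; linarith [hα.2]
  have hdneg : ∀ α ∈ Set.Ioo 0 abar, d.eval α < 0 :=
    aux_sign' (fun x => d.eval x) d.continuous_aeval abar h0 (fun x hx => (hnotin x hx).1)
  have hgpos : ∀ α ∈ Set.Ioo 0 abar, 0 < d.derivative.eval α * α - (p : ℝ) * d.eval α := by
    have := aux_sign' (fun x => -(d.derivative.eval x * x - (p : ℝ) * d.eval x))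
      (((d.derivative.continuous_aeval.mul continuous_id).sub
        (continuous_const.mul d.continuous_aeval)).neg) abar
      (by
        simp only [mul_zero, zero_sub, neg_neg]
        have : (0:ℝ) < (p:ℝ) := by exact_mod_cast Nat.pos_of_ne_zero hp0
        nlinarith)
      (fun x hx h => (hnotin x hx).2 (by linarith [neg_eq_zero.mp h]))
    intro α hα
    have h5 := this α hα
    simp only [neg_lt, neg_zero] at h5
    linarith
  -- continuity of f away from 0
  have hfca : ∀ x : ℝ, x ≠ 0 → ContinuousAt f x := by
    intro x hx
    exact (d.continuous_aeval.neg.continuousAt).div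
      ((continuous_pow p).continuousAt) (pow_ne_zero p hx)
  have hfabar : f abar = 0 := by simp [hf, hd]
  have hfpos : ∀ α ∈ Set.Ioo 0 abar, 0 < f α := fun α hα =>
    div_pos (neg_pos.2 (hdneg α hα)) (pow_pos hα.1 p)
  -- strict antitonicity of f on (0, abar]
  have hanti : StrictAntiOn f (Set.Ioc 0 abar) := by
    apply strictAntiOn_of_deriv_neg (convex_Ioc 0 abar)
      (fun x hx => (hfca x (ne_of_gt hx.1)).continuousWithinAt)
    rw [interior_Ioc]
    intro x hx
    have hxpos : 0 < x := hx.1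
    have hdv : HasDerivAt f
        ((-(d.derivative.eval x) * x ^ p - -(d.eval x) * ((p : ℝ) * x ^ (p - 1))) / (x ^ p) ^ 2)
        x := ((d.hasDerivAt x).neg).div (hasDerivAt_pow p x) (pow_ne_zero p (ne_of_gt hxpos))
    rw [hdv.deriv]
    apply div_neg_of_neg_of_pos
    · have hxp : x ^ p = x ^ (p - 1) * x := by
        rw [← pow_succ]; congr 1; omega
      have hnum : -(d.derivative.eval x) * x ^ p - -(d.eval x) * ((p : ℝ) * x ^ (p - 1))
          = -(x ^ (p - 1)) * (d.derivative.eval x * x - (p : ℝ) * d.eval x) := by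
        rw [hxp]; ring
      rw [hnum]
      have := mul_pos (pow_pos hxpos (p - 1)) (hgpos x hx)
      linarith
    · positivity
  -- f blows up near 0
  have htop : Tendsto f (nhdsWithin 0 (Set.Ioi 0)) atTop := by
    have h1 : Tendsto (fun α : ℝ => -d.eval α) (nhdsWithin 0 (Set.Ioi 0))
        (nhds (-d.eval 0)) := (d.continuous_aeval.neg.tendsto 0).mono_left nhdsWithin_le_nhds
    have h2 : Tendsto (fun α : ℝ => α ^ p) (nhdsWithin 0 (Set.Ioi 0))
        (nhdsWithin 0 (Set.Ioi 0)) := by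
      rw [tendsto_nhdsWithin_iff]
      constructor
      · have := ((continuous_pow p).tendsto 0).mono_left
          (nhdsWithin_le_nhds (s := Set.Ioi (0:ℝ)))
        simpa [zero_pow hp0] using this
      · filter_upwards [eventually_mem_nhdsWithin] with x hx
        exact pow_pos (Set.mem_Ioi.mp hx) p
    have h3 : Tendsto (fun α : ℝ => (α ^ p)⁻¹) (nhdsWithin 0 (Set.Ioi 0)) atTop :=
      Filter.Tendsto.inv_tendsto_nhdsGT_zero h2
    have h4 := Filter.Tendsto.pos_mul_atTop (neg_pos.2 h0) h1 h3
    simpa [hf, div_eq_mul_inv] using h4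
  -- surjectivity onto (0, ∞)
  have hsurj : ∀ σ : ℝ, 0 < σ → ∃ α, α ∈ Set.Ioo 0 abar ∧ f α = σ := by
    intro σ hσ
    have hev : ∀ᶠ α in nhdsWithin 0 (Set.Ioi 0), σ < f α := htop.eventually_gt_atTop σ
    have hev2 : ∀ᶠ α in nhdsWithin 0 (Set.Ioi 0), α ∈ Set.Ioo 0 abar :=
      eventually_of_mem (Ioo_mem_nhdsGT_of_mem ⟨le_refl 0, habar⟩) (fun _ h => h)
    obtain ⟨ε, hεf, hεm⟩ := (hev.and hev2).exists
    have hcont : ContinuousOn f (Set.Icc ε abar) := fun x hx =>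
      (hfca x (ne_of_gt (lt_of_lt_of_le hεm.1 hx.1))).continuousWithinAt
    have hmem : σ ∈ Set.Ioo (f abar) (f ε) := by rw [hfabar]; exact ⟨hσ, hεf⟩
    obtain ⟨c, hc, hfc⟩ := intermediate_value_Ioo' hεm.2.le hcont hmem
    exact ⟨c, ⟨hεm.1.trans hc.1, hc.2⟩, hfc⟩
  -- the inverse curve
  classical
  set ψ : ℝ → ℝ := fun σ =>
    if h : ∃ α, α ∈ Set.Ioo 0 abar ∧ f α = σ then h.choose else abar with hψdef
  have hψ1 : ∀ σ : ℝ, 0 < σ → ψ σ ∈ Set.Ioo 0 abar ∧ f (ψ σ) = σ := by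
    intro σ hσ
    have hs := hsurj σ hσ
    simp only [hψdef, dif_pos hs]
    exact hs.choose_spec
  have hψf : ∀ α ∈ Set.Ioo 0 abar, ψ (f α) = α := by
    intro α hα
    have h := hψ1 (f α) (hfpos α hα)
    exact hanti.injOn (Set.Ioo_subset_Ioc_self h.1) (Set.Ioo_subset_Ioc_self hα) h.2
  have hψanti : StrictAntiOn ψ (Set.Ioi 0) := by
    intro σ1 h1 σ2 h2 h12
    by_contra hcon
    push_neg at hcon
    rcases eq_or_lt_of_le hcon with heq | hlt
    · have e1 := (hψ1 σ1 h1).2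
      have e2 := (hψ1 σ2 h2).2
      rw [← heq] at e2
      rw [e1] at e2
      exact absurd e2 (ne_of_lt h12)
    · have h5 : f (ψ σ2) < f (ψ σ1) :=
        hanti (Set.Ioo_subset_Ioc_self (hψ1 σ1 h1).1)
          (Set.Ioo_subset_Ioc_self (hψ1 σ2 h2).1) hlt
      rw [(hψ1 σ2 h2).2, (hψ1 σ1 h1).2] at h5
      exact absurd h5 (not_lt.2 (le_of_lt h12))
  have himg : ψ '' (Set.Ioi 0) = Set.Ioo 0 abar := by
    apply Set.Subset.antisymm
    · rintro _ ⟨σ, hσ, rfl⟩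
      exact (hψ1 σ hσ).1
    · intro α hα
      exact ⟨f α, hfpos α hα, hψf α hα⟩
  -- continuity of ψ
  have hcontψ : ContinuousOn ψ (Set.Ioi 0) := by
    intro a ha
    have hg : StrictMonoOn (fun σ => -ψ σ) (Set.Ioi 0) :=
      fun x hx y hy hxy => neg_lt_neg (hψanti hx hy hxy)
    have himg' : (fun σ => -ψ σ) '' (Set.Ioi 0) = Set.Ioo (-abar) 0 := by
      rw [show (fun σ : ℝ => -ψ σ) = (fun x : ℝ => -x) ∘ ψ from rfl, Set.image_comp, himg]
      ext x
      constructor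
      · rintro ⟨y, hy, rfl⟩
        have hb : (fun x : ℝ => -x) y = -y := rfl
        rw [hb]
        exact ⟨by linarith [hy.2], by linarith [hy.1]⟩
      · intro hx
        exact ⟨-x, ⟨by linarith [hx.2], by linarith [hx.1]⟩, by simp⟩
    have hmemn : (fun σ => -ψ σ) '' (Set.Ioi 0) ∈ nhds (-ψ a) := by
      rw [himg']
      exact isOpen_Ioo.mem_nhds ⟨by linarith [(hψ1 a ha).1.2], by linarith [(hψ1 a ha).1.1]⟩
    have hga := hg.continuousAt_of_image_mem_nhds (isOpen_Ioi.mem_nhds ha) hmemn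
    have : ContinuousAt ψ a := by simpa [Pi.neg_def] using hga.neg
    exact this.continuousWithinAt
  -- local minimality
  have hlocmin : ∀ σ ∈ Set.Ioi (0:ℝ),
      IsLocalMin (fun s : ℝ => t.eval s + σ / ((p : ℝ) + 1) * |s| ^ (p + 1)) (ψ σ) := by
    intro σ hσ
    obtain ⟨hmem, hfeq⟩ := hψ1 σ hσ
    have hder : ∀ s : ℝ, HasDerivAt (fun s : ℝ => t.eval s + σ / ((p : ℝ) + 1) * s ^ (p + 1))
        (d.eval s + σ * s ^ p) s := fun s => aux_hasDerivAt' p t σ s hp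
    have hleft : ∀ s ∈ Set.Ioo 0 (ψ σ),
        deriv (fun s : ℝ => t.eval s + σ / ((p : ℝ) + 1) * s ^ (p + 1)) s ≤ 0 := by
      intro s hs
      rw [(hder s).deriv]
      have hsIoc : s ∈ Set.Ioc 0 abar := ⟨hs.1, (hs.2.trans hmem.2).le⟩
      have hfs : f (ψ σ) < f s := hanti hsIoc (Set.Ioo_subset_Ioc_self hmem) hs.2
      rw [hfeq] at hfs
      have : σ * s ^ p < -d.eval s := (lt_div_iff₀ (pow_pos hs.1 p)).1 hfs
      linarith
    have hright : ∀ s ∈ Set.Ioo (ψ σ) abar,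
        0 ≤ deriv (fun s : ℝ => t.eval s + σ / ((p : ℝ) + 1) * s ^ (p + 1)) s := by
      intro s hs
      rw [(hder s).deriv]
      have hsIoc : s ∈ Set.Ioc 0 abar := ⟨hmem.1.trans hs.1, hs.2.le⟩
      have hfs : f s < f (ψ σ) := hanti (Set.Ioo_subset_Ioc_self hmem) hsIoc hs.1
      rw [hfeq] at hfs
      have : -d.eval s < σ * s ^ p := (div_lt_iff₀ (pow_pos hsIoc.1 p)).1 hfs
      linarith
    have hcmin : IsLocalMin (fun s : ℝ => t.eval s + σ / ((p : ℝ) + 1) * s ^ (p + 1)) (ψ σ) :=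
      isLocalMin_of_deriv_Ioo hmem.1 hmem.2 (hder (ψ σ)).differentiableAt.continuousAt
        (fun s _ => (hder s).differentiableAt.differentiableWithinAt)
        (fun s _ => (hder s).differentiableAt.differentiableWithinAt) hleft hright
    apply hcmin.congr
    filter_upwards [isOpen_Ioi.mem_nhds (show ψ σ ∈ Set.Ioi (0:ℝ) from hmem.1)] with s hs
    rw [abs_of_pos hs]
  refine ⟨?_, ψ, hcontψ, hlocmin, hψf, ⟨abar, ?_⟩⟩
  · have hc : Tendsto f (nhdsWithin abar (Set.Iio abar)) (nhds (f abar)) :=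
      (hfca abar habar.ne').tendsto.mono_left nhdsWithin_le_nhds
    rwa [hfabar] at hc
  · intro σ hσ
    rw [abs_of_pos (hψ1 σ hσ).1.1]
    exact (hψ1 σ hσ).1.2.le

end

-- first order condition at a positive local minimizer
lemma aux_foc (t : Polynomial ℝ) (p : ℕ) (hp : 2 ≤ p) (σ x : ℝ) (hx : 0 < x)
    (hmin : IsLocalMin (fun s : ℝ => t.eval s + σ / ((p : ℝ) + 1) * |s| ^ (p + 1)) x) :
    t.derivative.eval x + σ * x ^ p = 0 := by
  have heq : (fun s : ℝ => t.eval s + σ / ((p : ℝ) + 1) * |s| ^ (p + 1)) =ᶠ[nhds x]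
      (fun s : ℝ => t.eval s + σ / ((p : ℝ) + 1) * s ^ (p + 1)) := by
    filter_upwards [isOpen_Ioi.mem_nhds (show x ∈ Set.Ioi (0:ℝ) from hx)] with s hs
    rw [abs_of_pos hs]
  have hmin' : IsLocalMin (fun s : ℝ => t.eval s + σ / ((p : ℝ) + 1) * s ^ (p + 1)) x :=
    hmin.congr heq
  have hd := hmin'.deriv_eq_zero
  rwa [(aux_hasDerivAt' p t σ x hp).deriv] at hd

lemma aux_converse (p : ℕ) (hp : 2 ≤ p) (t : Polynomial ℝ)
    (h0 : t.derivative.eval 0 < 0) (abar : ℝ)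
    (hleast : IsLeast {α : ℝ | 0 < α ∧ (t.derivative.eval α = 0 ∨
      t.derivative.derivative.eval α * α - (p : ℝ) * t.derivative.eval α = 0)} abar)
    (I : Set ℝ) (ψ : ℝ → ℝ) (hI : Set.Ioi 0 ⊆ I)
    (hmin : ∀ σ ∈ I, IsLocalMin (fun s : ℝ => t.eval s + σ / ((p : ℝ) + 1) * |s| ^ (p + 1)) (ψ σ))
    (hIoc : ∀ σ ∈ I, ψ σ ∈ Set.Ioc 0 abar) :
    t.derivative.eval abar = 0 := by
  have habar : 0 < abar := hleast.1.1
  set xs : ℕ → ℝ := fun n => ψ (1 / (n + 1 : ℝ)) with hxs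
  have hσpos : ∀ n : ℕ, (0 : ℝ) < 1 / (n + 1 : ℝ) := by intro n; positivity
  have hmem : ∀ n, xs n ∈ Set.Icc 0 abar := fun n =>
    Set.Ioc_subset_Icc_self (hIoc _ (hI (hσpos n)))
  have hmemIoc : ∀ n, xs n ∈ Set.Ioc 0 abar := fun n => hIoc _ (hI (hσpos n))
  obtain ⟨β, hβ, φ, hφ, hconv⟩ := isCompact_Icc.tendsto_subseq hmem
  have hfoc : ∀ n, t.derivative.eval (xs n) = -((1 / (n + 1 : ℝ)) * (xs n) ^ p) := by
    intro n
    have := aux_foc t p hp (1 / (n + 1 : ℝ)) (xs n) (hmemIoc n).1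
      (hmin _ (hI (hσpos n)))
    linarith
  -- the derivative values along the subsequence tend to 0
  have hbound : ∀ n : ℕ, ‖t.derivative.eval (xs (φ n))‖ ≤ abar ^ p * (1 / (n + 1 : ℝ)) := by
    intro n
    rw [hfoc (φ n), norm_neg, Real.norm_eq_abs]
    have h1 : (0:ℝ) < xs (φ n) := (hmemIoc (φ n)).1
    have h2 : xs (φ n) ≤ abar := (hmemIoc (φ n)).2
    have h3 : (xs (φ n)) ^ p ≤ abar ^ p := pow_le_pow_left₀ h1.le h2 p
    have h4 : (1 / ((φ n : ℝ) + 1)) ≤ 1 / ((n : ℝ) + 1) := by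
      apply one_div_le_one_div_of_le (by positivity)
      have : n ≤ φ n := hφ.le_apply
      have : ((n : ℝ)) ≤ ((φ n : ℝ)) := by exact_mod_cast ‹n ≤ φ n›
      linarith
    rw [abs_of_pos (by positivity)]
    calc (1 / ((φ n : ℝ) + 1)) * (xs (φ n)) ^ p
        ≤ (1 / ((n : ℝ) + 1)) * abar ^ p := by
          apply mul_le_mul h4 h3 (by positivity) (by positivity)
      _ = abar ^ p * (1 / (n + 1 : ℝ)) := by ring
  have ha : Tendsto (fun n : ℕ => abar ^ p * (1 / (n + 1 : ℝ))) atTop (nhds 0) := by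
    have := tendsto_one_div_add_atTop_nhds_zero_nat (𝕜 := ℝ)
    simpa using this.const_mul (abar ^ p)
  have hto0 : Tendsto (fun n => t.derivative.eval (xs (φ n))) atTop (nhds 0) :=
    squeeze_zero_norm hbound ha
  have hcont : Tendsto (fun n => t.derivative.eval (xs (φ n))) atTop
      (nhds (t.derivative.eval β)) := by
    have hc : Continuous fun x : ℝ => t.derivative.eval x := t.derivative.continuous_aeval
    exact (hc.tendsto β).comp hconv
  have hdβ : t.derivative.eval β = 0 := tendsto_nhds_unique hcont hto0
  have hβ0 : β ≠ 0 := fun h => absurd hdβ (by rw [h]; exact ne_of_lt h0)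
  have hβpos : 0 < β := lt_of_le_of_ne hβ.1 (Ne.symm hβ0)
  have : abar ≤ β := hleast.2 ⟨hβpos, Or.inl hdβ⟩
  have : β = abar := le_antisymm hβ.2 this
  rwa [this] at hdβ


theorem stmt_12 (p : ℕ) (hp : 2 ≤ p) (t : Polynomial ℝ)
    (hdeg : t.natDegree = p) (h0 : t.derivative.eval 0 < 0)
    (abar : ℝ)
    (hleast : IsLeast {α : ℝ | 0 < α ∧ (t.derivative.eval α = 0 ∨
      t.derivative.derivative.eval α * α - (p : ℝ) * t.derivative.eval α = 0)} abar)
    (hsimple :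
      (t.derivative.eval abar = 0 ∧ t.derivative.derivative.eval abar ≠ 0) ∨
      ((Polynomial.X * t.derivative.derivative - (p : ℝ) • t.derivative).eval abar = 0 ∧
        ((Polynomial.X * t.derivative.derivative
          - (p : ℝ) • t.derivative).derivative).eval abar ≠ 0)) :
    (t.derivative.eval abar = 0 →
      Filter.Tendsto (fun α : ℝ => -t.derivative.eval α / α ^ p)
        (nhdsWithin abar (Set.Iio abar)) (nhds 0) ∧
      ∃ ψ : ℝ → ℝ, ContinuousOn ψ (Set.Ioi 0) ∧
        (∀ σ ∈ Set.Ioi (0 : ℝ),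
          IsLocalMin (fun s : ℝ => t.eval s + σ / ((p : ℝ) + 1) * |s| ^ (p + 1)) (ψ σ)) ∧
        (∀ α ∈ Set.Ioo 0 abar, ψ (-t.derivative.eval α / α ^ p) = α) ∧
        (∃ M : ℝ, ∀ σ ∈ Set.Ioi (0 : ℝ), |ψ σ| ≤ M)) ∧
    ((∃ (I : Set ℝ) (ψ : ℝ → ℝ), I ⊆ Set.Ici 0 ∧ I.OrdConnected ∧ Set.Ioi 0 ⊆ I ∧
        ContinuousOn ψ I ∧
        (∀ σ ∈ I, IsLocalMin (fun s : ℝ => t.eval s + σ / ((p : ℝ) + 1) * |s| ^ (p + 1)) (ψ σ)) ∧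
        (∃ M : ℝ, ∀ σ ∈ I, |ψ σ| ≤ M) ∧
        (∀ σ ∈ I, ψ σ ∈ Set.Ioc 0 abar)) →
      t.derivative.eval abar = 0) := by
  constructor
  · intro hd
    exact aux_direct p t abar hp h0 hleast hd
  · rintro ⟨I, ψ, -, -, hI, -, hmin, -, hIoc⟩
    exact aux_converse p hp t h0 abar hleast I ψ hI hmin hIoc
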